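/- Let I = (0,∞), p ∈ (1,∞), w : I → (0,∞) measurable with ∫_x^∞ w^p < ∞ for all x > 0 and ∫_0^∞ w^p = ∞. If f is locally integrable near 0 and ∫_0^∞ |w(x) ∫_0^x f|^p dx < ∞, then liminf_{s→∞} |∫_0^s f|^p ∫_s^∞ w^p = 0. -/
import Mathlib


open MeasureTheory Set Filter Topology ENNReal

/-- Tail of an integrable function tends to zero. -/
lemma stmt14_tail_tendsto_zero {h : ℝ → ℝ} {c : ℝ} (hi : IntegrableOn h (Ioi c)) :
    Tendsto (fun a => ∫ x in Ioi a, h x) atTop (𝓝 0) := by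
  have h1 : Tendsto (fun b => ∫ x in c..b, h x) atTop (𝓝 (∫ x in Ioi c, h x)) :=
    intervalIntegral_tendsto_integral_Ioi c hi tendsto_id
  have h2 : Tendsto (fun b => (∫ x in Ioi c, h x) - ∫ x in c..b, h x) atTop (𝓝 0) := by
    simpa using h1.const_sub (∫ x in Ioi c, h x)
  refine h2.congr' ?_
  filter_upwards [eventually_ge_atTop c] with b hb
  have hsplit : (∫ x in Ioi c, h x) = (∫ x in Ioc c b, h x) + ∫ x in Ioi b, h x := by
    rw [← setIntegral_union (Ioc_disjoint_Ioi le_rfl) measurableSet_Ioi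
      (hi.mono_set Ioc_subset_Ioi_self) (hi.mono_set (Ioi_subset_Ioi hb)),
      Ioc_union_Ioi_eq_Ioi hb]
  rw [intervalIntegral.integral_of_le hb, hsplit]
  ring

theorem stmt14 (p : ℝ) (hp : 1 < p) (w : ℝ → ℝ) (hwm : Measurable w)
    (hwpos : ∀ x ∈ Ioi (0:ℝ), 0 < w x)
    (hwint : ∀ x ∈ Ioi (0:ℝ), IntegrableOn (fun t => w t ^ p) (Ioi x))
    (hwinf : ¬ IntegrableOn (fun t => w t ^ p) (Ioi (0:ℝ)))
    (f : ℝ → ℝ) (hfm : Measurable f)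
    (hfloc : ∀ x ∈ Ioi (0:ℝ), IntegrableOn f (Ioc 0 x))
    (hfCh : IntegrableOn (fun x => |w x * ∫ t in Ioc (0:ℝ) x, f t| ^ p) (Ioi 0)) :
    Filter.liminf
      (fun s => |∫ t in Ioc (0:ℝ) s, f t| ^ p * ∫ t in Ioi s, w t ^ p)
      atTop = 0 := by
  set F : ℝ → ℝ := fun s => ∫ t in Ioc (0:ℝ) s, f t with hFdef
  set W : ℝ → ℝ := fun s => ∫ t in Ioi s, w t ^ p with hWdef
  set g : ℝ → ℝ := fun s => |F s| ^ p * W s with hgdef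
  set G : ℝ → ℝ := fun x => w x ^ p * |F x| ^ p with hGdef
  -- basic positivity facts
  have hwp_nonneg : ∀ x ∈ Ioi (0:ℝ), 0 ≤ w x ^ p := fun x hx =>
    (Real.rpow_pos_of_pos (hwpos x hx) p).le
  have hW_nonneg : ∀ a : ℝ, 0 < a → 0 ≤ W a := fun a ha =>
    setIntegral_nonneg measurableSet_Ioi fun x hx =>
      hwp_nonneg x (lt_trans ha hx)
  have hW_anti : ∀ a b : ℝ, 0 < a → a ≤ b → W b ≤ W a := by
    intro a b ha hab
    refine setIntegral_mono_set (hwint a ha) ?_ ?_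
    · refine (ae_restrict_iff' measurableSet_Ioi).2 (Eventually.of_forall ?_)
      exact fun x hx => hwp_nonneg x (lt_trans ha hx)
    · exact (Ioi_subset_Ioi hab).eventuallyLE
  have hW_pos : ∀ a : ℝ, 0 < a → 0 < W a := by
    intro a ha
    rw [hWdef]
    rw [setIntegral_pos_iff_support_of_nonneg_ae
      ((ae_restrict_iff' measurableSet_Ioi).2 (Eventually.of_forall
        fun x hx => hwp_nonneg x (lt_trans ha hx))) (hwint a ha)]
    have hsub : Ioi a ⊆ Function.support (fun t => w t ^ p) ∩ Ioi a := by
      intro x hx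
      exact ⟨(Real.rpow_pos_of_pos (hwpos x (lt_trans ha hx)) p).ne', hx⟩
    calc (0:ℝ≥0∞) < volume (Ioi a) := by simp [Real.volume_Ioi]
    _ ≤ _ := measure_mono hsub
  -- split identity : W a = ∫ Ioc a b w^p + W b
  have hWsplit : ∀ a b : ℝ, 0 < a → a ≤ b →
      W a = (∫ x in Ioc a b, w x ^ p) + W b := by
    intro a b ha hab
    rw [hWdef]
    rw [← setIntegral_union (Ioc_disjoint_Ioi le_rfl) measurableSet_Ioi
      ((hwint a ha).mono_set Ioc_subset_Ioi_self)
      ((hwint a ha).mono_set (Ioi_subset_Ioi hab)), Ioc_union_Ioi_eq_Ioi hab]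
  -- G is integrable on Ioi 0
  have hGint : IntegrableOn G (Ioi 0) := by
    refine hfCh.congr_fun ?_ measurableSet_Ioi
    intro x hx
    have hw := hwpos x hx
    have : |w x * F x| = w x * |F x| := by
      rw [abs_mul, abs_of_pos hw]
    simp only [hGdef, hFdef]
    rw [this, Real.mul_rpow hw.le (abs_nonneg _)]
  -- tail limits
  have hW0 : Tendsto W atTop (𝓝 0) := stmt14_tail_tendsto_zero (hwint 1 (mem_Ioi.2 one_pos))
  have hT0 : Tendsto (fun a => ∫ x in Ioi a, G x) atTop (𝓝 0) :=
    stmt14_tail_tendsto_zero hGint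
  have hG_nonneg : ∀ x ∈ Ioi (0:ℝ), 0 ≤ G x := fun x hx =>
    mul_nonneg (hwp_nonneg x hx) (Real.rpow_nonneg (abs_nonneg _) p)
  -- key step : frequently small
  have key : ∀ ε : ℝ, 0 < ε → ∀ M : ℝ, ∃ s, M ≤ s ∧ g s < ε := by
    intro ε hε M
    obtain ⟨A, hA⟩ := (eventually_atTop.1 (hT0.eventually
      (eventually_lt_nhds (by linarith : (0:ℝ) < ε / 2))))
    set a : ℝ := max (max M 1) A with hadef
    have ha1 : (1:ℝ) ≤ a := le_max_of_le_left (le_max_right _ _)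
    have ha0 : (0:ℝ) < a := lt_of_lt_of_le one_pos ha1
    have haM : M ≤ a := le_max_of_le_left (le_max_left _ _)
    have hTa : (∫ x in Ioi a, G x) < ε / 2 := hA a (le_max_right _ _)
    have hWa := hW_pos a ha0
    obtain ⟨B, hB⟩ := (eventually_atTop.1 (hW0.eventually
      (eventually_lt_nhds (by positivity : (0:ℝ) < W a / 2))))
    set b : ℝ := max B (a + 1) with hbdef
    have hab : a < b := lt_of_lt_of_le (lt_add_one a) (le_max_right _ _)
    have hWb : W b < W a / 2 := hB b (le_max_left _ _)
    by_contra hcon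
    push_neg at hcon
    have hall : ∀ x ∈ Ioc a b, ε ≤ g x := by
      intro x hx
      exact le_of_not_gt fun hlt => (hcon x (haM.trans hx.1.le)).not_gt hlt
    -- pointwise lower bound on Ioc a b
    have hpt : ∀ x ∈ Ioc a b, ε / W a * w x ^ p ≤ G x := by
      intro x hx
      have hx0 : (0:ℝ) < x := lt_trans ha0 hx.1
      have hWx := hW_pos x hx0
      have hWxa : W x ≤ W a := hW_anti a x ha0 hx.1.le
      have h1 : ε / W x ≤ |F x| ^ p := by
        rw [div_le_iff₀ hWx]
        exact hall x hx
      have h2 : ε / W a ≤ ε / W x := div_le_div_of_nonneg_left hε.le hWx hWxa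
      calc ε / W a * w x ^ p ≤ |F x| ^ p * w x ^ p :=
            mul_le_mul_of_nonneg_right (h2.trans h1) (hwp_nonneg x hx0)
      _ = G x := by rw [hGdef]; ring
    -- integrate
    have hsub0 : Ioc a b ⊆ Ioi (0:ℝ) := fun x hx => lt_trans ha0 hx.1
    have hint1 : IntegrableOn (fun x => ε / W a * w x ^ p) (Ioc a b) :=
      ((hwint a ha0).mono_set Ioc_subset_Ioi_self).const_mul _
    have hint2 : IntegrableOn G (Ioc a b) := hGint.mono_set hsub0
    have hmono : (∫ x in Ioc a b, ε / W a * w x ^ p) ≤ ∫ x in Ioc a b, G x :=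
      setIntegral_mono_on hint1 hint2 measurableSet_Ioc hpt
    have htail : (∫ x in Ioc a b, G x) ≤ ∫ x in Ioi a, G x :=
      setIntegral_mono_set (hGint.mono_set (Ioi_subset_Ioi ha0.le))
        ((ae_restrict_iff' measurableSet_Ioi).2 (Eventually.of_forall
          fun x hx => hG_nonneg x (lt_trans ha0 hx)))
        Ioc_subset_Ioi_self.eventuallyLE
    have hIoc : (∫ x in Ioc a b, w x ^ p) = W a - W b := by
      have := hWsplit a b ha0 hab.le
      linarith
    have hconst : (∫ x in Ioc a b, ε / W a * w x ^ p)
        = ε / W a * (W a - W b) := by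
      rw [integral_const_mul, hIoc]
    have hlow : ε / 2 ≤ ε / W a * (W a - W b) := by
      have h3 : W a / 2 ≤ W a - W b := by linarith
      have h4 : ε / W a * (W a / 2) ≤ ε / W a * (W a - W b) :=
        mul_le_mul_of_nonneg_left h3 (by positivity)
      have h5 : ε / W a * (W a / 2) = ε / 2 := by
        field_simp
      linarith
    linarith [hconst ▸ hmono, htail]
  -- conclude about liminf
  have hfreq : ∀ ε : ℝ, 0 < ε → ∃ᶠ s in atTop, g s ≤ ε := by
    intro ε hε
    rw [frequently_atTop]
    intro M
    obtain ⟨s, hs1, hs2⟩ := key ε hε M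
    exact ⟨s, hs1, hs2.le⟩
  have hnn : ∀ᶠ s in atTop, 0 ≤ g s := by
    filter_upwards [eventually_gt_atTop (0:ℝ)] with s hs
    exact mul_nonneg (Real.rpow_nonneg (abs_nonneg _) p) (hW_nonneg s hs)
  have hbdd : atTop.IsBoundedUnder (· ≥ ·) g := ⟨0, by simpa using hnn⟩
  have h1 : liminf g atTop ≤ 0 := by
    refine le_of_forall_pos_le_add ?_
    intro ε hε
    have := liminf_le_of_frequently_le (hfreq ε hε) hbdd
    linarith
  have h2 : (0:ℝ) ≤ liminf g atTop :=
    le_liminf_of_le (IsCoboundedUnder.of_frequently_le (hfreq 1 one_pos)) hnn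
  linarith
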